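/- Let F be a field, let H ∈ F^{(n−k)×n} be a matrix with columns h_0,…,h_{n−1}, and let 𝒞 = {x ∈ F^n : Hx = 0}. Let E ⊆ {0,…,n−1}, let m ≤ n be a positive integer, and set I = E ∩ {0,…,m−1}. Suppose that for every i ∈ I, h_i does not lie in the linear span of {h_j : j ∈ E, j ≥ i+1}. Then for any two codewords x, y ∈ 𝒞 with x_j = y_j for all j ∉ E, one has x_i = y_i for all i ∈ I; i.e., the code symbols indexed by I are uniquely determined by the unerased code symbols. -/
import Mathlib


/-- Parity-check criterion for erasure recovery: if for each erased index
`i ∈ E ∩ {0,…,m-1}` the `i`-th column of `H` is not in the span of the columns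
indexed by the erased positions after `i`, then any two codewords of
`𝒞 = ker H` agreeing outside `E` agree on `E ∩ {0,…,m-1}`. -/
theorem parity_check_recovery (F : Type) [Field F] (n k m : ℕ) (hm : 0 < m)
    (hmn : m ≤ n) (H : Matrix (Fin (n - k)) (Fin n) F) (E : Finset (Fin n))
    (hind : ∀ i ∈ E, (i : ℕ) < m →
      (fun s => H s i) ∉
        Submodule.span F ((fun j => fun s => H s j) '' {j : Fin n | j ∈ E ∧ i < j})) :
    ∀ x y : Fin n → F, H.mulVec x = 0 → H.mulVec y = 0 →
      (∀ j, j ∉ E → x j = y j) →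
      ∀ i ∈ E, (i : ℕ) < m → x i = y i := by
  intro x y hx hy hout
  set d : Fin n → F := x - y with hd
  have hHd : H.mulVec d = 0 := by
    rw [hd, Matrix.mulVec_sub, hx, hy, sub_zero]
  have hsum : ∑ j, d j • (fun s => H s j) = (0 : Fin (n - k) → F) := by
    funext s
    have := congrFun hHd s
    simpa [Matrix.mulVec, dotProduct, mul_comm] using this
  have hdE : ∀ j, j ∉ E → d j = 0 := by
    intro j hj
    simp [hd, hout j hj]
  have main : ∀ N : ℕ, ∀ i : Fin n, (i : ℕ) = N → i ∈ E → (i : ℕ) < m → d i = 0 := by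
    intro N
    induction N using Nat.strong_induction_on with
    | _ N IH =>
      intro i hiN hiE him
      by_contra hdi
      apply hind i hiE him
      have h1 : d i • (fun s => H s i) =
          - ∑ j ∈ Finset.univ.erase i, d j • (fun s => H s j) := by
        have := Finset.add_sum_erase Finset.univ
          (fun j => d j • (fun s => H s j)) (Finset.mem_univ i)
        rw [hsum] at this
        linear_combination (norm := abel) this
      have h2 : (fun s => H s i) = (- (d i)⁻¹) •
          ∑ j ∈ Finset.univ.erase i, d j • (fun s => H s j) := by
        calc (fun s => H s i) = (d i)⁻¹ • (d i • (fun s => H s i)) := by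
              rw [smul_smul, inv_mul_cancel₀ hdi, one_smul]
          _ = (d i)⁻¹ • (- ∑ j ∈ Finset.univ.erase i, d j • (fun s => H s j)) := by
              rw [h1]
          _ = (- (d i)⁻¹) • ∑ j ∈ Finset.univ.erase i, d j • (fun s => H s j) := by
              rw [smul_neg, neg_smul]
      rw [h2]
      apply Submodule.smul_mem
      apply Submodule.sum_mem
      intro j hj
      have hji : j ≠ i := Finset.ne_of_mem_erase hj
      by_cases hdj : d j = 0
      · simp [hdj]
      · have hjE : j ∈ E := by
          by_contra hjE
          exact hdj (hdE j hjE)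
        have hij : i < j := by
          rcases lt_trichotomy i j with h | h | h
          · exact h
          · exact absurd h.symm hji
          · exact absurd (IH (j : ℕ) (hiN ▸ Fin.lt_iff_val_lt_val.mp h) j rfl hjE (lt_trans (Fin.lt_iff_val_lt_val.mp h) him)) hdj
        apply Submodule.smul_mem
        exact Submodule.subset_span ⟨j, ⟨hjE, hij⟩, rfl⟩
  intro i hiE him
  have h0 : x i - y i = 0 := main (i : ℕ) i rfl hiE him
  exact sub_eq_zero.mp h0
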